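/- There exists a probability measure F on [0,∞) such that F belongs to 𝓛_loc, F does not belong to 𝓢_loc, and for every d > 0 the local distribution x ↦ F((x, x+d]) is not almost decreasing, i.e., for every d > 0 and every x₀ ≥ 0 one has sup_{x₀ ≤ x ≤ y < ∞} F((y, y+d])/F((x, x+d]) = ∞. -/

import Mathlib

open MeasureTheory Filter Set

noncomputable section

/-- The local mass `F((x, x+d])` of a measure, as a real number. -/
def locMass (F : Measure ℝ) (d x : ℝ) : ℝ := (F (Set.Ioc x (x + d))).toReal

/-- `F ∈ 𝓛_{Δ_d}` : the local distribution is eventually positive and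
`F(x+s+Δ_d)/F(x+Δ_d) → 1` uniformly in `|s| ≤ t`, for each `t > 0`. -/
def MemLdelta (F : Measure ℝ) (d : ℝ) : Prop :=
  (∀ᶠ x in atTop, 0 < locMass F d x) ∧
  ∀ t > (0:ℝ), ∀ ε > (0:ℝ), ∀ᶠ x in atTop, ∀ s : ℝ, |s| ≤ t →
    |locMass F d (x + s) / locMass F d x - 1| ≤ ε

/-- Convolution of two measures on `ℝ`: the law of the sum of two
independent random variables with laws `F` and `G`. -/
def mconv (F G : Measure ℝ) : Measure ℝ :=
  Measure.map (fun p : ℝ × ℝ => p.1 + p.2) (F.prod G)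

/-- `F ∈ 𝓢_{Δ_d}` : moreover `(F*F)(x+Δ_d)/F(x+Δ_d) → 2`. -/
def MemSdelta (F : Measure ℝ) (d : ℝ) : Prop :=
  MemLdelta F d ∧
  Tendsto (fun x => locMass (mconv F F) d x / locMass F d x) atTop (nhds 2)

/-- `F ∈ 𝓛_loc`. -/
def MemLloc (F : Measure ℝ) : Prop := ∀ d > (0:ℝ), MemLdelta F d

/-- `F ∈ 𝓢_loc`. -/
def MemSloc (F : Measure ℝ) : Prop := ∀ d > (0:ℝ), MemSdelta F d

/-- `F` is locally almost decreasing at level `d`. -/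
def LocAlmostDecr (F : Measure ℝ) (d : ℝ) : Prop :=
  ∃ x₀ : ℝ, (∀ x : ℝ, x₀ ≤ x → 0 < locMass F d x) ∧
    ∃ C : ℝ, ∀ x y : ℝ, x₀ ≤ x → x ≤ y → locMass F d y / locMass F d x ≤ C

set_option maxHeartbeats 1000000

open scoped ENNReal NNReal

namespace Cons
open Real

noncomputable def g (x : ℝ) : ℝ :=
  2 * Real.log (x + 1) + Real.sqrt (x + 1) * (1 + Real.sin (Real.log (x + 1)))

noncomputable def g' (x : ℝ) : ℝ :=
  2 * (1 / (x + 1)) +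
    (1 / (2 * Real.sqrt (x + 1)) * (1 + Real.sin (Real.log (x + 1))) +
      Real.sqrt (x + 1) * (Real.cos (Real.log (x + 1)) * (1 / (x + 1))))

lemma hasDerivAt_g {x : ℝ} (hx : 0 ≤ x) : HasDerivAt g (g' x) x := by
  have hne : x + 1 ≠ 0 := by linarith
  have h1 : HasDerivAt (fun y : ℝ => y + 1) 1 x := (hasDerivAt_id x).add_const 1
  have hlog : HasDerivAt (fun y : ℝ => Real.log (y + 1)) (1 / (x + 1)) x := h1.log hne
  have hsqrt : HasDerivAt (fun y : ℝ => Real.sqrt (y + 1)) (1 / (2 * Real.sqrt (x + 1))) x := by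
    simpa using h1.sqrt hne
  have hsin : HasDerivAt (fun y : ℝ => Real.sin (Real.log (y + 1)))
      (Real.cos (Real.log (x + 1)) * (1 / (x + 1))) x := hlog.sin
  have honesin : HasDerivAt (fun y : ℝ => 1 + Real.sin (Real.log (y + 1)))
      (Real.cos (Real.log (x + 1)) * (1 / (x + 1))) x := hsin.const_add 1
  unfold g g'
  exact (HasDerivAt.const_mul (2:ℝ) hlog).add (hsqrt.mul honesin)

lemma abs_g'_le {x : ℝ} (hx : 0 ≤ x) : |g' x| ≤ 4 / Real.sqrt (x + 1) := by
  have h1 : (1:ℝ) ≤ x + 1 := by linarith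
  have hr1 : (1:ℝ) ≤ Real.sqrt (x + 1) := by
    have h := Real.sqrt_le_sqrt (show (1:ℝ) ≤ x + 1 by linarith)
    rwa [Real.sqrt_one] at h
  have hrpos : 0 < Real.sqrt (x + 1) := by linarith
  have hsq : Real.sqrt (x + 1) * Real.sqrt (x + 1) = x + 1 :=
    Real.mul_self_sqrt (by linarith)
  set r := Real.sqrt (x + 1) with hr
  have hxr : 1 / (x + 1) ≤ 1 / (r * r) := by rw [hsq]
  -- term bounds
  have ht1 : |2 * (1 / (x + 1))| ≤ 2 / r := by
    rw [abs_of_nonneg (by positivity)]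
    have he : 2 * (1 / (x + 1)) = 2 / (r * r) := by rw [hsq]; ring
    rw [he, div_le_div_iff₀ (by positivity) hrpos]
    nlinarith
  have hsin' : |1 + Real.sin (Real.log (x + 1))| ≤ 2 := by
    have := Real.neg_one_le_sin (Real.log (x + 1))
    have := Real.sin_le_one (Real.log (x + 1))
    rw [abs_le]; constructor <;> linarith
  have ht2 : |1 / (2 * r) * (1 + Real.sin (Real.log (x + 1)))| ≤ 1 / r := by
    rw [abs_mul, abs_of_nonneg (by positivity)]
    calc 1 / (2 * r) * |1 + Real.sin (Real.log (x + 1))| ≤ 1 / (2 * r) * 2 := by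
          apply mul_le_mul_of_nonneg_left hsin' (by positivity)
      _ = 1 / r := by field_simp
  have ht3 : |r * (Real.cos (Real.log (x + 1)) * (1 / (x + 1)))| ≤ 1 / r := by
    rw [abs_mul, abs_mul, abs_of_nonneg hrpos.le, abs_of_nonneg (by positivity : (0:ℝ) ≤ 1 / (x+1))]
    have hc := Real.abs_cos_le_one (Real.log (x + 1))
    calc r * (|Real.cos (Real.log (x + 1))| * (1 / (x + 1)))
        ≤ r * (1 * (1 / (x + 1))) := by
          apply mul_le_mul_of_nonneg_left _ hrpos.le
          apply mul_le_mul_of_nonneg_right hc (by positivity)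
      _ = r * (1 / (r * r)) := by rw [hsq]; ring
      _ = 1 / r := by field_simp
  calc |g' x| ≤ |2 * (1 / (x + 1))| + (|1 / (2 * r) * (1 + Real.sin (Real.log (x + 1)))| +
        |r * (Real.cos (Real.log (x + 1)) * (1 / (x + 1)))|) := by
        unfold g'
        exact (abs_add_le _ _).trans (by gcongr; exact abs_add_le _ _)
    _ ≤ 2 / r + (1 / r + 1 / r) := by gcongr
    _ = 4 / r := by ring

lemma sqrt_le_sqrt_of_le {a b : ℝ} (h : a ≤ b) : Real.sqrt a ≤ Real.sqrt b :=
  Real.sqrt_le_sqrt h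

lemma g_lip {a x y : ℝ} (ha : 0 ≤ a) (hx : a ≤ x) (hy : a ≤ y) :
    |g y - g x| ≤ 4 / Real.sqrt (a + 1) * |y - x| := by
  have hbound : ∀ t ∈ Ici a, ‖g' t‖ ≤ 4 / Real.sqrt (a + 1) := by
    intro t ht
    simp only [mem_Ici] at ht
    have h1 := abs_g'_le (le_trans ha ht)
    refine h1.trans ?_
    have h2 : Real.sqrt (a + 1) ≤ Real.sqrt (t + 1) := Real.sqrt_le_sqrt (by linarith)
    have : (0:ℝ) < Real.sqrt (a + 1) := Real.sqrt_pos.2 (by linarith)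
    exact div_le_div_of_nonneg_left (by norm_num) this h2
  have hderiv : ∀ t ∈ Ici a, HasDerivWithinAt g (g' t) (Ici a) t := fun t ht =>
    (hasDerivAt_g (le_trans ha ht)).hasDerivWithinAt
  have := Convex.norm_image_sub_le_of_norm_hasDerivWithin_le hderiv hbound (convex_Ici a) hx hy
  simpa [Real.norm_eq_abs] using this

lemma g_ge {x : ℝ} (hx : 0 ≤ x) : 2 * Real.log (x + 1) ≤ g x := by
  have h1 : 0 ≤ Real.sqrt (x + 1) := Real.sqrt_nonneg _
  have h2 : 0 ≤ 1 + Real.sin (Real.log (x + 1)) := by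
    have := Real.neg_one_le_sin (Real.log (x + 1)); linarith
  unfold g; nlinarith

lemma g_le {x : ℝ} (hx : 0 ≤ x) : g x ≤ 2 * Real.log (x + 1) + 2 * Real.sqrt (x + 1) := by
  have h1 : 0 ≤ Real.sqrt (x + 1) := Real.sqrt_nonneg _
  have h2 : 1 + Real.sin (Real.log (x + 1)) ≤ 2 := by
    have := Real.sin_le_one (Real.log (x + 1)); linarith
  unfold g; nlinarith

noncomputable def fd (x : ℝ) : ℝ≥0∞ :=
  if 0 ≤ x then ENNReal.ofReal (Real.exp (-g x)) else 0

lemma measurable_g : Measurable g := by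
  unfold g
  have hlog : Measurable fun x : ℝ => Real.log (x + 1) :=
    Real.measurable_log.comp (measurable_id.add_const 1)
  have hsqrt : Measurable fun x : ℝ => Real.sqrt (x + 1) :=
    Real.continuous_sqrt.measurable.comp (measurable_id.add_const 1)
  exact ((hlog.const_mul 2)).add (hsqrt.mul ((Real.measurable_sin.comp hlog).const_add 1))

lemma measurable_fd : Measurable fd := by
  unfold fd
  exact Measurable.ite measurableSet_Ici
    ((measurable_g.neg.exp).ennreal_ofReal) measurable_const

noncomputable def S : ℝ≥0∞ := ∫⁻ x, fd x

lemma fd_le (x : ℝ) :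
    fd x ≤ (Icc (0:ℝ) 1).indicator (fun _ => 1) x
      + (Ioi (1:ℝ)).indicator (fun x => ENNReal.ofReal (x ^ (-2:ℝ))) x := by
  unfold fd
  by_cases hx : 0 ≤ x
  · rw [if_pos hx]
    by_cases hx1 : x ≤ 1
    · rw [Set.indicator_of_mem (show x ∈ Icc (0:ℝ) 1 from ⟨hx, hx1⟩)]
      refine le_trans ?_ le_self_add
      rw [show (1:ℝ≥0∞) = ENNReal.ofReal 1 by simp]
      apply ENNReal.ofReal_le_ofReal
      rw [Real.exp_le_one_iff, neg_nonpos]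
      have h1 : 0 ≤ Real.log (x + 1) := Real.log_nonneg (by linarith)
      linarith [g_ge hx]
    · push_neg at hx1
      rw [Set.indicator_of_mem (show x ∈ Ioi (1:ℝ) from hx1)]
      refine le_trans ?_ le_add_self
      apply ENNReal.ofReal_le_ofReal
      have hx1' : (0:ℝ) < x := by linarith
      have key : Real.exp (-g x) ≤ ((x + 1) ^ (2:ℕ))⁻¹ := by
        have h2 : Real.exp (-g x) ≤ Real.exp (-(2 * Real.log (x + 1))) := by
          apply Real.exp_le_exp.2; have := g_ge hx; linarith
        refine h2.trans ?_
        rw [show 2 * Real.log (x+1) = Real.log ((x+1) ^ (2:ℕ)) by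
              rw [Real.log_pow]; push_cast; ring,
            Real.exp_neg, Real.exp_log (by positivity)]
      refine key.trans ?_
      rw [Real.rpow_neg hx1'.le, show (2:ℝ) = ((2:ℕ):ℝ) by norm_num, Real.rpow_natCast]
      apply inv_anti₀ (by positivity)
      apply pow_le_pow_left₀ (by linarith) (by linarith)
  · rw [if_neg hx]; exact zero_le

lemma S_lt_top : S < ∞ := by
  have h1 : S ≤ ∫⁻ x, ((Icc (0:ℝ) 1).indicator (fun _ => 1) x
      + (Ioi (1:ℝ)).indicator (fun x => ENNReal.ofReal (x ^ (-2:ℝ))) x) :=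
    lintegral_mono fd_le
  refine lt_of_le_of_lt h1 ?_
  rw [lintegral_add_left ((measurable_const).indicator measurableSet_Icc)]
  apply ENNReal.add_lt_top.2
  constructor
  · rw [lintegral_indicator measurableSet_Icc]
    rw [setLIntegral_const]
    simp [Real.volume_Icc]
  · rw [lintegral_indicator measurableSet_Ioi]
    exact (integrableOn_Ioi_rpow_of_lt (by norm_num) one_pos).setLIntegral_lt_top

lemma S_pos : 0 < S := by
  have h0 : ∀ x ∈ Icc (0:ℝ) 1, ENNReal.ofReal (Real.exp (-6)) ≤ fd x := by
    intro x hx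
    obtain ⟨hx0, hx1⟩ := hx
    unfold fd
    rw [if_pos hx0]
    apply ENNReal.ofReal_le_ofReal
    apply Real.exp_le_exp.2
    have h1 : Real.log (x + 1) ≤ 1 := by
      have := Real.log_le_sub_one_of_pos (show (0:ℝ) < x + 1 by linarith)
      linarith
    have h2 : Real.sqrt (x + 1) ≤ 2 := by
      have := Real.sqrt_le_sqrt (show x + 1 ≤ 4 by linarith)
      rwa [show Real.sqrt 4 = 2 by
        rw [show (4:ℝ) = 2^2 by norm_num, Real.sqrt_sq (by norm_num)]] at this
    have := g_le hx0
    linarith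
  have h1 : ENNReal.ofReal (Real.exp (-6)) * volume (Icc (0:ℝ) 1) ≤ S := by
    calc ENNReal.ofReal (Real.exp (-6)) * volume (Icc (0:ℝ) 1)
        = ∫⁻ _ in Icc (0:ℝ) 1, ENNReal.ofReal (Real.exp (-6)) := (setLIntegral_const _ _).symm
      _ ≤ ∫⁻ x in Icc (0:ℝ) 1, fd x := setLIntegral_mono measurable_fd h0
      _ ≤ ∫⁻ x, fd x := setLIntegral_le_lintegral _ _
  refine lt_of_lt_of_le ?_ h1
  simp [Real.volume_Icc, Real.exp_pos]

noncomputable def FF : Measure ℝ := S⁻¹ • (volume.withDensity fd)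

lemma FF_apply {A : Set ℝ} (hA : MeasurableSet A) : FF A = S⁻¹ * ∫⁻ x in A, fd x := by
  rw [FF, Measure.smul_apply, withDensity_apply _ hA, smul_eq_mul]

instance FF_prob : IsProbabilityMeasure FF := by
  constructor
  rw [FF_apply MeasurableSet.univ, Measure.restrict_univ]
  exact ENNReal.inv_mul_cancel S_pos.ne' S_lt_top.ne

lemma FF_Iio : FF (Iio 0) = 0 := by
  rw [FF_apply measurableSet_Iio]
  have : ∫⁻ x in Iio (0:ℝ), fd x = 0 := by
    rw [← lintegral_zero]
    apply setLIntegral_congr_fun measurableSet_Iio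
    · intro x hx
      unfold fd
      rw [if_neg (by exact not_le.2 hx)]
    
  rw [this, mul_zero]

/-- real normalizing constant -/
noncomputable def sc : ℝ := S.toReal

lemma sc_pos : 0 < sc := ENNReal.toReal_pos S_pos.ne' S_lt_top.ne

lemma fd_bounds {x d u : ℝ} (hx : 0 ≤ x) (hd : 0 < d) (hu : u ∈ Ioc x (x + d)) :
    ENNReal.ofReal (Real.exp (-g x - 4 * d / Real.sqrt (x + 1))) ≤ fd u ∧
    fd u ≤ ENNReal.ofReal (Real.exp (-g x + 4 * d / Real.sqrt (x + 1))) := by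
  obtain ⟨hu1, hu2⟩ := hu
  have hu0 : 0 ≤ u := le_trans hx hu1.le
  have hlip := g_lip hx (le_refl x) hu1.le
  have habs : |u - x| ≤ d := by rw [abs_of_nonneg (by linarith)]; linarith
  have hsp : 0 < Real.sqrt (x + 1) := Real.sqrt_pos.2 (by linarith)
  have hkey : |g u - g x| ≤ 4 * d / Real.sqrt (x + 1) := by
    calc |g u - g x| ≤ 4 / Real.sqrt (x + 1) * |u - x| := hlip
      _ ≤ 4 / Real.sqrt (x + 1) * d := by
          apply mul_le_mul_of_nonneg_left habs (by positivity)
      _ = 4 * d / Real.sqrt (x + 1) := by ring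
  rw [abs_le] at hkey
  unfold fd
  rw [if_pos hu0]
  constructor
  · apply ENNReal.ofReal_le_ofReal
    apply Real.exp_le_exp.2
    linarith [hkey.2]
  · apply ENNReal.ofReal_le_ofReal
    apply Real.exp_le_exp.2
    linarith [hkey.1]

lemma locMass_FF_bounds {x d : ℝ} (hx : 0 ≤ x) (hd : 0 < d) :
    sc⁻¹ * (Real.exp (-g x - 4 * d / Real.sqrt (x + 1)) * d) ≤ locMass FF d x ∧
    locMass FF d x ≤ sc⁻¹ * (Real.exp (-g x + 4 * d / Real.sqrt (x + 1)) * d) := by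
  set lo := Real.exp (-g x - 4 * d / Real.sqrt (x + 1)) with hlo
  set hi := Real.exp (-g x + 4 * d / Real.sqrt (x + 1)) with hhi
  have hIoc : volume (Ioc x (x + d)) = ENNReal.ofReal d := by
    rw [Real.volume_Ioc]; congr 1; ring
  have hLB : ENNReal.ofReal lo * ENNReal.ofReal d ≤ ∫⁻ u in Ioc x (x + d), fd u := by
    calc ENNReal.ofReal lo * ENNReal.ofReal d
        = ∫⁻ _ in Ioc x (x + d), ENNReal.ofReal lo := by
          rw [setLIntegral_const, hIoc]
      _ ≤ ∫⁻ u in Ioc x (x + d), fd u :=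
          setLIntegral_mono measurable_fd (fun u hu => (fd_bounds hx hd hu).1)
  have hUB : ∫⁻ u in Ioc x (x + d), fd u ≤ ENNReal.ofReal hi * ENNReal.ofReal d := by
    calc ∫⁻ u in Ioc x (x + d), fd u
        ≤ ∫⁻ _ in Ioc x (x + d), ENNReal.ofReal hi :=
          setLIntegral_mono' measurableSet_Ioc (fun u hu => (fd_bounds hx hd hu).2)
      _ = ENNReal.ofReal hi * ENNReal.ofReal d := by rw [setLIntegral_const, hIoc]
  have hfin : S⁻¹ * (ENNReal.ofReal hi * ENNReal.ofReal d) ≠ ∞ := by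
    apply ENNReal.mul_ne_top (ENNReal.inv_ne_top.2 S_pos.ne') (ENNReal.mul_ne_top
      ENNReal.ofReal_ne_top ENNReal.ofReal_ne_top)
  have hlm : locMass FF d x = (S⁻¹ * ∫⁻ u in Ioc x (x + d), fd u).toReal := by
    unfold locMass
    rw [FF_apply measurableSet_Ioc]
  have htoReal : ∀ c : ℝ, 0 ≤ c →
      (S⁻¹ * (ENNReal.ofReal c * ENNReal.ofReal d)).toReal = sc⁻¹ * (c * d) := by
    intro c hc
    rw [ENNReal.toReal_mul, ENNReal.toReal_mul, ENNReal.toReal_inv,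
      ENNReal.toReal_ofReal hc, ENNReal.toReal_ofReal hd.le]
    rfl
  constructor
  · rw [hlm, ← htoReal lo (Real.exp_pos _).le]
    apply ENNReal.toReal_mono
    · exact ne_top_of_le_ne_top hfin (mul_le_mul_right hUB _)
    · exact mul_le_mul_right hLB _
  · rw [hlm, ← htoReal hi (Real.exp_pos _).le]
    apply ENNReal.toReal_mono hfin
    exact mul_le_mul_right hUB _

lemma locMass_FF_pos {x d : ℝ} (hx : 0 ≤ x) (hd : 0 < d) : 0 < locMass FF d x :=
  lt_of_lt_of_le
    (mul_pos (inv_pos.2 sc_pos) (mul_pos (Real.exp_pos _) hd))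
    (locMass_FF_bounds hx hd).1

/-- the `sin = 1` points (values of x+1) -/
noncomputable def pp (m : ℕ) : ℝ := Real.exp (π / 2 + 2 * π * m)
/-- the `sin = -1` points (values of x+1) -/
noncomputable def qq (m : ℕ) : ℝ := Real.exp (3 * π / 2 + 2 * π * m)

lemma pp_pos (m : ℕ) : 0 < pp m := Real.exp_pos _
lemma qq_pos (m : ℕ) : 0 < qq m := Real.exp_pos _

lemma pp_ge (m : ℕ) : 1 + (π / 2 + 2 * π * m) ≤ pp m := by
  have := Real.add_one_le_exp (π / 2 + 2 * π * m)
  unfold pp; linarith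

lemma qq_ge (m : ℕ) : 1 + (3 * π / 2 + 2 * π * m) ≤ qq m := by
  have := Real.add_one_le_exp (3 * π / 2 + 2 * π * m)
  unfold qq; linarith

lemma pp_ge_m (m : ℕ) : (m:ℝ) ≤ pp m - 1 := by
  have h := pp_ge m
  have hπ := Real.pi_gt_three
  have : (m:ℝ) ≥ 0 := Nat.cast_nonneg m
  nlinarith

lemma qq_ge_m (m : ℕ) : (m:ℝ) ≤ qq m - 1 := by
  have h := qq_ge m
  have hπ := Real.pi_gt_three
  have : (m:ℝ) ≥ 0 := Nat.cast_nonneg m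
  nlinarith

lemma pp_le_qq (m : ℕ) : pp m ≤ qq m := by
  apply Real.exp_le_exp.2
  have hπ := Real.pi_gt_three
  linarith

lemma sin_at_pp (m : ℕ) : Real.sin (Real.log (pp m)) = 1 := by
  unfold pp
  rw [Real.log_exp]
  rw [show π / 2 + 2 * π * m = π / 2 + m * (2 * π) by ring]
  rw [Real.sin_add_nat_mul_two_pi, Real.sin_pi_div_two]

lemma log_qq (m : ℕ) : Real.log (qq m) = 3 * π / 2 + 2 * π * m := by
  unfold qq; rw [Real.log_exp]

lemma log_pp (m : ℕ) : Real.log (pp m) = π / 2 + 2 * π * m := by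
  unfold pp; rw [Real.log_exp]

lemma sin_at_qq (m : ℕ) : Real.sin (Real.log (qq m)) = -1 := by
  unfold qq
  rw [Real.log_exp]
  rw [show 3 * π / 2 + 2 * π * m = π / 2 + π + m * (2 * π) by ring]
  rw [Real.sin_add_nat_mul_two_pi, Real.sin_add_pi, Real.sin_pi_div_two]

lemma g_at_pp (m : ℕ) : g (pp m - 1) =
    2 * (π / 2 + 2 * π * m) + 2 * Real.sqrt (pp m) := by
  unfold g
  rw [show pp m - 1 + 1 = pp m by ring, sin_at_pp]
  rw [show Real.log (pp m) = π / 2 + 2 * π * m by unfold pp; rw [Real.log_exp]]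
  ring

lemma g_at_qq (m : ℕ) : g (qq m - 1) = 2 * (3 * π / 2 + 2 * π * m) := by
  unfold g
  rw [show qq m - 1 + 1 = qq m by ring, sin_at_qq]
  rw [show Real.log (qq m) = 3 * π / 2 + 2 * π * m by unfold qq; rw [Real.log_exp]]
  ring

lemma sqrt_qq (m : ℕ) : Real.sqrt (qq m) = Real.exp (3 * π / 4 + π * m) := by
  unfold qq
  rw [show 3 * π / 2 + 2 * π * m = (3 * π / 4 + π * m) + (3 * π / 4 + π * m) by ring,
    Real.exp_add, Real.sqrt_mul_self (Real.exp_pos _).le]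

lemma sqrt_pp (m : ℕ) : Real.sqrt (pp m) = Real.exp (π / 4 + π * m) := by
  unfold pp
  rw [show π / 2 + 2 * π * m = (π / 4 + π * m) + (π / 4 + π * m) by ring,
    Real.exp_add, Real.sqrt_mul_self (Real.exp_pos _).le]

-- numeric bounds for the δ interval
lemma exp_pt6_lt : Real.exp 0.6 < 1.9375 := by
  have h3 : Real.exp 3 < 2.7182818286 ^ 3 := by
    rw [show (3:ℝ) = ((3:ℕ):ℝ) * 1 by norm_num, Real.exp_nat_mul]
    exact pow_lt_pow_left₀ Real.exp_one_lt_d9 (Real.exp_pos 1).le (by norm_num)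
  have h5 : Real.exp 0.6 ^ 5 = Real.exp 3 := by
    rw [← Real.exp_nat_mul]; norm_num
  have hlt : Real.exp 0.6 ^ 5 < 1.9375 ^ 5 := by
    rw [h5]; refine h3.trans_le ?_; norm_num
  exact lt_of_pow_lt_pow_left₀ 5 (by norm_num) hlt

lemma two_lt_exp_pt7 : (2:ℝ) < Real.exp 0.7 := by
  have h7 : (2.7182818283:ℝ) ^ 7 < Real.exp 7 := by
    rw [show (7:ℝ) = ((7:ℕ):ℝ) * 1 by norm_num, Real.exp_nat_mul]
    exact pow_lt_pow_left₀ Real.exp_one_gt_d9 (by norm_num) (by norm_num)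
  have h10 : Real.exp 0.7 ^ 10 = Real.exp 7 := by
    rw [← Real.exp_nat_mul]; norm_num
  have : (2:ℝ) ^ 10 < Real.exp 0.7 ^ 10 := by
    rw [h10]
    calc (2:ℝ) ^ 10 = 1024 := by norm_num
      _ < 2.7182818283 ^ 7 := by norm_num
      _ < Real.exp 7 := h7
  exact lt_of_pow_lt_pow_left₀ 10 (Real.exp_pos _).le this

/-- the key sine lower bound at the doubled point -/
lemma one_add_sin_at_double (m : ℕ) (hq : 16 ≤ qq m) :
    1 / 10 ≤ 1 + Real.sin (Real.log (2 * qq m - 1)) := by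
  have hqpos : (0:ℝ) < qq m := qq_pos m
  set δ := Real.log (2 - 1 / qq m) with hδdef
  have h2q : 2 * qq m - 1 = qq m * (2 - 1 / qq m) := by field_simp
  have hfacpos : (0:ℝ) < 2 - 1 / qq m := by
    have : 1 / qq m ≤ 1 / 16 := by
      apply div_le_div_of_nonneg_left (by norm_num) (by norm_num) hq
    linarith [show (0:ℝ) < 1 / qq m by positivity]
  have hlog : Real.log (2 * qq m - 1) = (3 * π / 2 + 2 * π * m) + δ := by
    rw [h2q, Real.log_mul hqpos.ne' hfacpos.ne', log_qq]
  -- bounds on δ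
  have hδ_lb : 0.6 ≤ δ := by
    rw [hδdef]
    rw [show (0.6:ℝ) = Real.log (Real.exp 0.6) by rw [Real.log_exp]]
    apply Real.log_le_log (Real.exp_pos _)
    have : 1 / qq m ≤ 1 / 16 := by
      apply div_le_div_of_nonneg_left (by norm_num) (by norm_num) hq
    have := exp_pt6_lt
    linarith
  have hδ_ub : δ ≤ 0.7 := by
    rw [hδdef]
    rw [show (0.7:ℝ) = Real.log (Real.exp 0.7) by rw [Real.log_exp]]
    apply Real.log_le_log hfacpos
    have : (0:ℝ) < 1 / qq m := by positivity
    have := two_lt_exp_pt7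
    linarith
  -- sin (3π/2 + 2πm + δ) = -cos δ
  have hsin : Real.sin (Real.log (2 * qq m - 1)) = -Real.cos δ := by
    rw [hlog, show (3 * π / 2 + 2 * π * m) + δ = (δ + π / 2 + π) + m * (2 * π) by ring,
      Real.sin_add_nat_mul_two_pi, Real.sin_add_pi, Real.sin_add_pi_div_two]
  rw [hsin]
  -- cos δ ≤ 9/10
  have hcb := Real.cos_bound (show |δ| ≤ 1 by rw [abs_of_nonneg (by linarith)]; linarith)
  rw [abs_le] at hcb
  have habs : |δ| = δ := abs_of_nonneg (by linarith)
  rw [habs] at hcb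
  have hub : Real.cos δ ≤ 1 - δ ^ 2 / 2 + δ ^ 4 * (5 / 96) := by linarith [hcb.2]
  have h2a : (0.36:ℝ) ≤ δ ^ 2 := by nlinarith
  have h2b : δ ^ 2 ≤ (0.49:ℝ) := by nlinarith
  have h4 : δ ^ 4 ≤ (0.2401:ℝ) := by nlinarith [sq_nonneg (δ^2)]
  linarith

/-- lower bound for `g` at the doubled point -/
lemma g_at_double_ge (m : ℕ) (hq : 16 ≤ qq m) :
    2 * Real.log (2 * qq m - 1) + Real.sqrt (2 * qq m - 1) * (1 / 10)
      ≤ g (2 * (qq m - 1)) := by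
  have h1 : 2 * (qq m - 1) + 1 = 2 * qq m - 1 := by ring
  unfold g
  rw [h1]
  have hs := one_add_sin_at_double m hq
  have hsq : (0:ℝ) ≤ Real.sqrt (2 * qq m - 1) := Real.sqrt_nonneg _
  nlinarith

/-- the two-sided comparison at distant points -/
lemma ratio_bound {d t x s : ℝ} (hd : 0 < d) (ht : 0 < t) (hxt : t ≤ x) (hs : |s| ≤ t) :
    locMass FF d (x + s) ≤
      Real.exp ((4 * t + 8 * d) / Real.sqrt (x - t + 1)) * locMass FF d x ∧
    locMass FF d x ≤
      Real.exp ((4 * t + 8 * d) / Real.sqrt (x - t + 1)) * locMass FF d (x + s) := by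
  have ha : (0:ℝ) ≤ x - t := by linarith
  obtain ⟨hs1, hs2⟩ := abs_le.1 hs
  have hx0 : (0:ℝ) ≤ x := by linarith
  have hxs0 : (0:ℝ) ≤ x + s := by linarith
  have hsa : Real.sqrt (x - t + 1) ≤ Real.sqrt (x + 1) := Real.sqrt_le_sqrt (by linarith)
  have hsa' : Real.sqrt (x - t + 1) ≤ Real.sqrt (x + s + 1) := Real.sqrt_le_sqrt (by linarith)
  have hap : (0:ℝ) < Real.sqrt (x - t + 1) := Real.sqrt_pos.2 (by linarith)
  have hgd : |g (x + s) - g x| ≤ 4 * t / Real.sqrt (x - t + 1) := by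
    calc |g (x + s) - g x| ≤ 4 / Real.sqrt (x - t + 1) * |x + s - x| :=
          g_lip ha (by linarith) (by linarith)
      _ ≤ 4 / Real.sqrt (x - t + 1) * t := by
          apply mul_le_mul_of_nonneg_left _ (by positivity)
          simpa using hs
      _ = 4 * t / Real.sqrt (x - t + 1) := by ring
  rw [abs_le] at hgd
  have hd1 : 4 * d / Real.sqrt (x + 1) ≤ 4 * d / Real.sqrt (x - t + 1) :=
    div_le_div_of_nonneg_left (by positivity) hap hsa
  have hd2 : 4 * d / Real.sqrt (x + s + 1) ≤ 4 * d / Real.sqrt (x - t + 1) :=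
    div_le_div_of_nonneg_left (by positivity) hap hsa'
  constructor
  · calc locMass FF d (x + s)
        ≤ sc⁻¹ * (Real.exp (-g (x + s) + 4 * d / Real.sqrt (x + s + 1)) * d) :=
          (locMass_FF_bounds hxs0 hd).2
      _ ≤ Real.exp ((4 * t + 8 * d) / Real.sqrt (x - t + 1)) *
          (sc⁻¹ * (Real.exp (-g x - 4 * d / Real.sqrt (x + 1)) * d)) := by
          rw [show Real.exp ((4 * t + 8 * d) / Real.sqrt (x - t + 1)) *
              (sc⁻¹ * (Real.exp (-g x - 4 * d / Real.sqrt (x + 1)) * d)) =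
              sc⁻¹ * (Real.exp ((4 * t + 8 * d) / Real.sqrt (x - t + 1)) *
                Real.exp (-g x - 4 * d / Real.sqrt (x + 1)) * d) by ring]
          apply mul_le_mul_of_nonneg_left _ (inv_pos.2 sc_pos).le
          apply mul_le_mul_of_nonneg_right _ hd.le
          rw [← Real.exp_add]
          apply Real.exp_le_exp.2
          have h8 : (8:ℝ) * d / Real.sqrt (x - t + 1)
              = 4 * d / Real.sqrt (x - t + 1) + 4 * d / Real.sqrt (x - t + 1) := by ring
          have := hgd.1
          have hsplit : (4 * t + 8 * d) / Real.sqrt (x - t + 1)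
              = 4 * t / Real.sqrt (x - t + 1) + (4 * d / Real.sqrt (x - t + 1)
                + 4 * d / Real.sqrt (x - t + 1)) := by ring
          rw [hsplit]
          linarith
      _ ≤ Real.exp ((4 * t + 8 * d) / Real.sqrt (x - t + 1)) * locMass FF d x := by
          apply mul_le_mul_of_nonneg_left (locMass_FF_bounds hx0 hd).1 (Real.exp_pos _).le
  · calc locMass FF d x
        ≤ sc⁻¹ * (Real.exp (-g x + 4 * d / Real.sqrt (x + 1)) * d) :=
          (locMass_FF_bounds hx0 hd).2
      _ ≤ Real.exp ((4 * t + 8 * d) / Real.sqrt (x - t + 1)) *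
          (sc⁻¹ * (Real.exp (-g (x + s) - 4 * d / Real.sqrt (x + s + 1)) * d)) := by
          rw [show Real.exp ((4 * t + 8 * d) / Real.sqrt (x - t + 1)) *
              (sc⁻¹ * (Real.exp (-g (x + s) - 4 * d / Real.sqrt (x + s + 1)) * d)) =
              sc⁻¹ * (Real.exp ((4 * t + 8 * d) / Real.sqrt (x - t + 1)) *
                Real.exp (-g (x + s) - 4 * d / Real.sqrt (x + s + 1)) * d) by ring]
          apply mul_le_mul_of_nonneg_left _ (inv_pos.2 sc_pos).le
          apply mul_le_mul_of_nonneg_right _ hd.le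
          rw [← Real.exp_add]
          apply Real.exp_le_exp.2
          have := hgd.2
          have hsplit : (4 * t + 8 * d) / Real.sqrt (x - t + 1)
              = 4 * t / Real.sqrt (x - t + 1) + (4 * d / Real.sqrt (x - t + 1)
                + 4 * d / Real.sqrt (x - t + 1)) := by ring
          rw [hsplit]
          linarith
      _ ≤ Real.exp ((4 * t + 8 * d) / Real.sqrt (x - t + 1)) * locMass FF d (x + s) := by
          apply mul_le_mul_of_nonneg_left (locMass_FF_bounds hxs0 hd).1 (Real.exp_pos _).le

lemma memLloc_FF : MemLloc FF := by
  intro d hd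
  constructor
  · filter_upwards [eventually_ge_atTop (0:ℝ)] with x hx
    exact locMass_FF_pos hx hd
  · intro t ht ε hε
    set δ := Real.log (1 + ε) with hδ
    have hδpos : 0 < δ := Real.log_pos (by linarith)
    have hXbig : ∀ᶠ x in atTop, x ≥ t + ((4 * t + 8 * d) / δ) ^ 2 :=
      eventually_ge_atTop _
    filter_upwards [hXbig, eventually_ge_atTop t] with x hX hxt
    intro s hs
    have hP := locMass_FF_pos (show (0:ℝ) ≤ x + s by
      obtain ⟨h1, _⟩ := abs_le.1 hs; linarith) hd
    have hQ := locMass_FF_pos (show (0:ℝ) ≤ x by linarith) hd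
    have hrb := ratio_bound hd ht hxt hs
    -- the exponent is at most δ
    have hexp : (4 * t + 8 * d) / Real.sqrt (x - t + 1) ≤ δ := by
      have h1 : ((4 * t + 8 * d) / δ) ^ 2 ≤ x - t + 1 := by nlinarith
      have h2 : (4 * t + 8 * d) / δ ≤ Real.sqrt (x - t + 1) := by
        have := Real.sqrt_le_sqrt h1
        rwa [Real.sqrt_sq (by positivity)] at this
      rw [div_le_iff₀ (Real.sqrt_pos.2 (by nlinarith))]
      rw [div_le_iff₀ hδpos] at h2
      calc 4 * t + 8 * d ≤ Real.sqrt (x - t + 1) * δ := h2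
        _ = δ * Real.sqrt (x - t + 1) := by ring
    have hee : Real.exp ((4 * t + 8 * d) / Real.sqrt (x - t + 1)) ≤ 1 + ε := by
      calc Real.exp ((4 * t + 8 * d) / Real.sqrt (x - t + 1)) ≤ Real.exp δ :=
            Real.exp_le_exp.2 hexp
        _ = 1 + ε := Real.exp_log (by linarith)
    set P := locMass FF d (x + s)
    set Q := locMass FF d x
    have h1 : P ≤ (1 + ε) * Q := by
      calc P ≤ Real.exp ((4 * t + 8 * d) / Real.sqrt (x - t + 1)) * Q := hrb.1
        _ ≤ (1 + ε) * Q := mul_le_mul_of_nonneg_right hee hQ.le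
    have h2 : Q ≤ (1 + ε) * P := by
      calc Q ≤ Real.exp ((4 * t + 8 * d) / Real.sqrt (x - t + 1)) * P := hrb.2
        _ ≤ (1 + ε) * P := mul_le_mul_of_nonneg_right hee hP.le
    rw [abs_le]
    constructor
    · have : (1 - ε) * Q ≤ P := by nlinarith
      rw [le_sub_iff_add_le]
      rw [le_div_iff₀ hQ]
      nlinarith
    · rw [sub_le_iff_le_add, div_le_iff₀ hQ]
      nlinarith

/-- generic two-point ratio lower bound -/
lemma ratio_ge {x y d : ℝ} (hx : 0 ≤ x) (hy : 0 ≤ y) (hd : 0 < d) :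
    Real.exp (g x - g y - 8 * d) ≤ locMass FF d y / locMass FF d x := by
  have hPx := locMass_FF_pos hx hd
  rw [le_div_iff₀ hPx]
  have hsx : (1:ℝ) ≤ Real.sqrt (x + 1) := by
    have := Real.sqrt_le_sqrt (show (1:ℝ) ≤ x + 1 by linarith)
    rwa [Real.sqrt_one] at this
  have hsy : (1:ℝ) ≤ Real.sqrt (y + 1) := by
    have := Real.sqrt_le_sqrt (show (1:ℝ) ≤ y + 1 by linarith)
    rwa [Real.sqrt_one] at this
  have hdx : 4 * d / Real.sqrt (x + 1) ≤ 4 * d := by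
    rw [div_le_iff₀ (by linarith)]; nlinarith
  have hdy : 4 * d / Real.sqrt (y + 1) ≤ 4 * d := by
    rw [div_le_iff₀ (by linarith)]; nlinarith
  calc Real.exp (g x - g y - 8 * d) * locMass FF d x
      ≤ Real.exp (g x - g y - 8 * d) * (sc⁻¹ * (Real.exp (-g x + 4 * d / Real.sqrt (x + 1)) * d)) :=
        mul_le_mul_of_nonneg_left (locMass_FF_bounds hx hd).2 (Real.exp_pos _).le
    _ ≤ sc⁻¹ * (Real.exp (-g y - 4 * d / Real.sqrt (y + 1)) * d) := by
        rw [show Real.exp (g x - g y - 8 * d) * (sc⁻¹ * (Real.exp (-g x + 4 * d / Real.sqrt (x + 1)) * d))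
          = sc⁻¹ * (Real.exp (g x - g y - 8 * d) * Real.exp (-g x + 4 * d / Real.sqrt (x + 1)) * d) by ring]
        apply mul_le_mul_of_nonneg_left _ (inv_pos.2 sc_pos).le
        apply mul_le_mul_of_nonneg_right _ hd.le
        rw [← Real.exp_add]
        apply Real.exp_le_exp.2
        linarith
    _ ≤ locMass FF d y := (locMass_FF_bounds hy hd).1

/-- non almost-decreasing clause -/
lemma notAD : ∀ d > (0:ℝ), ∀ x₀ : ℝ, 0 ≤ x₀ → ∀ C : ℝ,
    ∃ x y : ℝ, x₀ ≤ x ∧ x ≤ y ∧ C < locMass FF d y / locMass FF d x := by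
  intro d hd x₀ hx₀ C
  obtain ⟨B, hB⟩ : ∃ B : ℝ, B = Real.log (max C 1) := ⟨_, rfl⟩
  obtain ⟨m, hm⟩ := exists_nat_ge (max x₀ ((B + 1 + 2 * π + 8 * d) / 2))
  have hm1 : x₀ ≤ (m:ℝ) := le_trans (le_max_left _ _) hm
  have hm2 : (B + 1 + 2 * π + 8 * d) / 2 ≤ (m:ℝ) := le_trans (le_max_right _ _) hm
  refine ⟨pp m - 1, qq m - 1, le_trans hm1 (pp_ge_m m), by linarith [pp_le_qq m], ?_⟩
  have hmnn : (0:ℝ) ≤ (m:ℝ) := Nat.cast_nonneg m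
  have hx : (0:ℝ) ≤ pp m - 1 := le_trans hmnn (pp_ge_m m)
  have hy : (0:ℝ) ≤ qq m - 1 := le_trans hmnn (qq_ge_m m)
  have hr := ratio_ge hx hy hd
  refine lt_of_lt_of_le ?_ hr
  have hgx : g (pp m - 1) - g (qq m - 1) = 2 * Real.sqrt (pp m) - 2 * π := by
    rw [g_at_pp, g_at_qq]; ring
  rw [hgx]
  have hsp : (m:ℝ) ≤ Real.sqrt (pp m) := by
    rw [sqrt_pp]
    have h1 := Real.add_one_le_exp (π / 4 + π * m)
    have hπ := Real.pi_gt_three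
    nlinarith
  have hCB : C ≤ Real.exp B := by
    rw [hB, Real.exp_log (by positivity : (0:ℝ) < max C 1)]
    exact le_max_left _ _
  refine lt_of_le_of_lt hCB ?_
  apply Real.exp_lt_exp.2
  nlinarith

/-- convolution lower bound -/
lemma conv_lb (y : ℝ) : locMass FF 1 y ^ 2 ≤ locMass (mconv FF FF) 2 (2 * y) := by
  have hmeas : Measurable (fun p : ℝ × ℝ => p.1 + p.2) := measurable_fst.add measurable_snd
  have hprob : IsProbabilityMeasure (mconv FF FF) :=
    Measure.isProbabilityMeasure_map hmeas.aemeasurable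
  have hmap : mconv FF FF (Ioc (2*y) (2*y+2)) =
      (FF.prod FF) ((fun p : ℝ × ℝ => p.1 + p.2) ⁻¹' Ioc (2*y) (2*y+2)) := by
    unfold mconv; rw [Measure.map_apply hmeas measurableSet_Ioc]
  have hsub : (Ioc y (y+1)) ×ˢ (Ioc y (y+1))
      ⊆ (fun p : ℝ × ℝ => p.1 + p.2) ⁻¹' Ioc (2*y) (2*y+2) := by
    rintro ⟨a, b⟩ ⟨⟨ha1, ha2⟩, ⟨hb1, hb2⟩⟩
    simp only [mem_preimage, mem_Ioc]
    constructor <;> [linarith; linarith]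
  have hmono : FF (Ioc y (y+1)) * FF (Ioc y (y+1)) ≤ mconv FF FF (Ioc (2*y) (2*y+2)) := by
    rw [hmap, ← Measure.prod_prod]
    exact measure_mono hsub
  have h2 : locMass (mconv FF FF) 2 (2*y) = (mconv FF FF (Ioc (2*y) (2*y+2))).toReal := by
    unfold locMass; norm_num
  rw [h2]
  have hlhs : locMass FF 1 y ^ 2 = (FF (Ioc y (y+1)) * FF (Ioc y (y+1))).toReal := by
    unfold locMass
    rw [ENNReal.toReal_mul]; ring
  rw [hlhs]
  exact ENNReal.toReal_mono (measure_ne_top _ _) hmono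

/-- the convolution ratio does not tend to 2 -/
lemma not_tendsto_conv :
    ¬ Tendsto (fun x => locMass (mconv FF FF) 2 x / locMass FF 2 x) atTop (nhds 2) := by
  intro h
  have h3 : ∀ᶠ x in atTop, locMass (mconv FF FF) 2 x / locMass FF 2 x < 3 :=
    h.eventually_lt_const (by norm_num)
  rw [eventually_atTop] at h3
  obtain ⟨X, hX⟩ := h3
  obtain ⟨B2, hB2⟩ : ∃ B2 : ℝ, B2 = Real.log (6 * sc) := ⟨_, rfl⟩
  obtain ⟨m, hm⟩ := exists_nat_ge (max (max 67 ((B2 + 16) / 3 + 1)) X)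
  have hm67 : (67:ℝ) ≤ m := le_trans (le_trans (le_max_left _ _) (le_max_left _ _)) hm
  have hmB : (B2 + 16) / 3 + 1 ≤ m :=
    le_trans (le_trans (le_max_right _ _) (le_max_left _ _)) hm
  have hmX : X ≤ m := le_trans (le_max_right _ _) hm
  have hπ := Real.pi_gt_three
  have hπ4 := Real.pi_lt_d2
  have hmnn : (0:ℝ) ≤ (m:ℝ) := Nat.cast_nonneg m
  have hqm : (m:ℝ) ≤ qq m - 1 := qq_ge_m m
  have hq16 : (16:ℝ) ≤ qq m := by nlinarith [qq_ge m]
  have hq1 : (1:ℝ) ≤ qq m := by linarith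
  have hx0 : (0:ℝ) ≤ 2 * (qq m - 1) := by nlinarith
  have hxX : X ≤ 2 * (qq m - 1) := by nlinarith
  have hD := locMass_FF_pos hx0 (show (0:ℝ) < 2 by norm_num)
  obtain ⟨L, hL⟩ : ∃ L : ℝ, L = 3 * π / 2 + 2 * π * (m:ℝ) := ⟨_, rfl⟩
  have hLpos : 0 < L := by rw [hL]; positivity
  have hxx1 : 2 * (qq m - 1) + 1 = 2 * qq m - 1 := by ring
  have hsx1 : (1:ℝ) ≤ Real.sqrt (2 * (qq m - 1) + 1) := by
    have := Real.sqrt_le_sqrt (show (1:ℝ) ≤ 2 * (qq m - 1) + 1 by nlinarith)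
    rwa [Real.sqrt_one] at this
  have h8 : 4 * 2 / Real.sqrt (2 * (qq m - 1) + 1) ≤ 8 := by
    rw [div_le_iff₀ (by linarith)]; nlinarith
  -- g lower bound at the doubled point
  have hgx : 2 * L + Real.exp (L / 2) / 10 ≤ g (2 * (qq m - 1)) := by
    have h1 := g_at_double_ge m hq16
    have h2 : L ≤ Real.log (2 * qq m - 1) := by
      rw [hL, ← log_qq m]
      exact Real.log_le_log (qq_pos m) (by linarith)
    have h3 : Real.exp (L / 2) ≤ Real.sqrt (2 * qq m - 1) := by
      have h3a : Real.sqrt (qq m) ≤ Real.sqrt (2 * qq m - 1) :=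
        Real.sqrt_le_sqrt (by linarith)
      rw [sqrt_qq] at h3a
      refine le_trans (le_of_eq ?_) h3a
      rw [hL]; congr 1; ring
    nlinarith
  -- numerator lower bound
  have hy0 : (0:ℝ) ≤ qq m - 1 := by linarith
  have hsy : (1:ℝ) ≤ Real.sqrt (qq m - 1 + 1) := by
    have := Real.sqrt_le_sqrt (show (1:ℝ) ≤ qq m - 1 + 1 by linarith)
    rwa [Real.sqrt_one] at this
  have hgy : g (qq m - 1) = 2 * L := by rw [g_at_qq, hL]
  have hNlb : sc⁻¹ * Real.exp (-(2 * L) - 4) ≤ locMass FF 1 (qq m - 1) := by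
    refine le_trans ?_ (locMass_FF_bounds hy0 one_pos).1
    rw [mul_one]
    apply mul_le_mul_of_nonneg_left _ (inv_pos.2 sc_pos).le
    apply Real.exp_le_exp.2
    have h4 : 4 * 1 / Real.sqrt (qq m - 1 + 1) ≤ 4 := by
      rw [div_le_iff₀ (by linarith)]; nlinarith
    linarith
  -- denominator upper bound
  have hDub : locMass FF 2 (2 * (qq m - 1))
      ≤ sc⁻¹ * (Real.exp (-(2 * L) - Real.exp (L / 2) / 10 + 8) * 2) := by
    refine le_trans (locMass_FF_bounds hx0 (by norm_num)).2 ?_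
    apply mul_le_mul_of_nonneg_left _ (inv_pos.2 sc_pos).le
    apply mul_le_mul_of_nonneg_right _ (by norm_num)
    apply Real.exp_le_exp.2
    linarith
  -- key numeric inequality
  have hz : B2 ≤ Real.exp (L / 2) / 10 - 2 * L - 16 := by
    obtain ⟨u, hu⟩ : ∃ u : ℝ, u = L / 2 := ⟨_, rfl⟩
    have hupos : (0:ℝ) < u := by rw [hu]; linarith
    have hexp : (1 + u / 2) ^ 2 ≤ Real.exp u := by
      have h1 := Real.add_one_le_exp (u / 2)
      have h2 : Real.exp u = Real.exp (u / 2) * Real.exp (u / 2) := by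
        rw [← Real.exp_add]; congr 1; ring
      nlinarith [Real.exp_pos (u / 2)]
    have hu3m : 3 * (m:ℝ) ≤ u := by
      rw [hu, hL]
      linarith [mul_nonneg (show (0:ℝ) ≤ π - 3 by linarith) hmnn]
    have hu201 : (201:ℝ) ≤ u := by linarith
    have h201u : 201 * u ≤ u ^ 2 := by
      have := mul_nonneg (show (0:ℝ) ≤ u - 201 by linarith) hupos.le
      nlinarith
    have hq1' : u ≤ u ^ 2 / 40 - 4 * u := by linarith
    have hBm : B2 ≤ 3 * (m:ℝ) - 16 := by linarith
    have hmid : (1 + u + u ^ 2 / 4) / 10 ≤ Real.exp u / 10 := by nlinarith [hexp]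
    have hL4u : 2 * L = 4 * u := by rw [hu]; ring
    rw [← hu, hL4u]
    linarith
  have h6sc : 6 * sc ≤ Real.exp (Real.exp (L / 2) / 10 - 2 * L - 16) := by
    have h1 : Real.exp B2 = 6 * sc := by
      rw [hB2]; exact Real.exp_log (mul_pos (by norm_num) sc_pos)
    rw [← h1]
    exact Real.exp_le_exp.2 hz
  -- combine: 3 ≤ ratio at the chosen point
  have hge : 3 ≤ locMass (mconv FF FF) 2 (2 * (qq m - 1)) / locMass FF 2 (2 * (qq m - 1)) := by
    rw [le_div_iff₀ hD]
    have step : 6 * sc * Real.exp (-(2 * L) - Real.exp (L / 2) / 10 + 8)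
        ≤ Real.exp (-(4 * L) - 8) := by
      have h1 := mul_le_mul_of_nonneg_right h6sc
        (Real.exp_pos (-(2 * L) - Real.exp (L / 2) / 10 + 8)).le
      rwa [← Real.exp_add, show Real.exp (L / 2) / 10 - 2 * L - 16 +
        (-(2 * L) - Real.exp (L / 2) / 10 + 8) = -(4 * L) - 8 by ring] at h1
    have hBsq : (sc⁻¹ * Real.exp (-(2 * L) - 4)) ^ 2
        = sc⁻¹ * sc⁻¹ * Real.exp (-(4 * L) - 8) := by
      rw [pow_two, ← mul_assoc, show sc⁻¹ * Real.exp (-(2 * L) - 4) * sc⁻¹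
        = sc⁻¹ * sc⁻¹ * Real.exp (-(2 * L) - 4) by ring, mul_assoc, ← Real.exp_add]
      congr 2
      ring
    calc 3 * locMass FF 2 (2 * (qq m - 1))
        ≤ 3 * (sc⁻¹ * (Real.exp (-(2 * L) - Real.exp (L / 2) / 10 + 8) * 2)) :=
          mul_le_mul_of_nonneg_left hDub (by norm_num)
      _ = sc⁻¹ * sc⁻¹ * (sc * (6 * Real.exp (-(2 * L) - Real.exp (L / 2) / 10 + 8))) := by
          have hthis : sc⁻¹ * sc⁻¹ * sc = sc⁻¹ := by field_simp
          linear_combination (-6 * Real.exp (-(2 * L) - Real.exp (L / 2) / 10 + 8)) * hthis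
      _ ≤ sc⁻¹ * sc⁻¹ * Real.exp (-(4 * L) - 8) := by
          apply mul_le_mul_of_nonneg_left _
            (mul_nonneg (inv_pos.2 sc_pos).le (inv_pos.2 sc_pos).le)
          calc sc * (6 * Real.exp (-(2 * L) - Real.exp (L / 2) / 10 + 8))
              = 6 * sc * Real.exp (-(2 * L) - Real.exp (L / 2) / 10 + 8) := by ring
            _ ≤ Real.exp (-(4 * L) - 8) := step
      _ = (sc⁻¹ * Real.exp (-(2 * L) - 4)) ^ 2 := hBsq.symm
      _ ≤ locMass FF 1 (qq m - 1) ^ 2 := by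
          apply pow_le_pow_left₀
            (mul_nonneg (inv_pos.2 sc_pos).le (Real.exp_pos _).le) hNlb
      _ ≤ locMass (mconv FF FF) 2 (2 * (qq m - 1)) := conv_lb (qq m - 1)
  have := hX _ hxX
  linarith

end Cons

theorem exists_local_longtailed_not_local_subexponential_not_locally_almost_decreasing :
    ∃ F : Measure ℝ, IsProbabilityMeasure F ∧ F (Set.Iio 0) = 0 ∧
      MemLloc F ∧ ¬ MemSloc F ∧
      ∀ d > (0:ℝ), ∀ x₀ : ℝ, 0 ≤ x₀ → ∀ C : ℝ,
        ∃ x y : ℝ, x₀ ≤ x ∧ x ≤ y ∧ C < locMass F d y / locMass F d x := by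
  refine ⟨Cons.FF, Cons.FF_prob, Cons.FF_Iio, Cons.memLloc_FF, ?_, Cons.notAD⟩
  intro h
  exact Cons.not_tendsto_conv (h 2 (by norm_num)).2
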